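/- arXiv:1407.0135 — 2 statements merged into one kernel-verified Lean document; each statement's English description precedes it below -/
import Mathlib

section
/- Assume t ≥ 1 and u ≥ 0, and write b = b(t), N = N(t,u). Let x be an integer such that (x, |ax|_N, |bx|_N) is a Voronoi relative minimum of |Γ(a,b,N)|. Suppose that either there is an even integer k with 0 ≤ k ≤ a−1 such that kN/(2a) + au + γ ≤ x < (k+1)N/(2a), or there is an odd integer k with 0 ≤ k ≤ a−1 such that kN/(2a) ≤ x < (k+1)N/(2a) − (au+γ). Then |bx|_N ≤ α. -/
/-- The box `Π(A)` spanned by a (finite nonempty) set `A ⊆ ℝⁿ_{≥0}`: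
all points with nonnegative coordinates bounded by the coordinatewise maxima of `A`. -/
def box {n : ℕ} (A : Set (Fin n → ℝ)) : Set (Fin n → ℝ) :=
  {x | ∀ i, 0 ≤ x i ∧ x i ≤ sSup ((fun p => p i) '' A)}

/-- The set of Voronoi relative minima of `S`: points `g ∈ S` such that the box
`Π({g})` contains no point of `S \ {g}`. -/
def vrm {n : ℕ} (S : Set (Fin n → ℝ)) : Set (Fin n → ℝ) :=
  {g | g ∈ S ∧ ∀ p ∈ S, p ≠ g → p ∉ box {g}}

/-- A nonempty finite subset `F ⊆ vrm S` is minimal if the box `Π(F)` contains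
no point of `vrm S \ F`. -/
def IsMinimal {n : ℕ} (S F : Set (Fin n → ℝ)) : Prop :=
  F.Nonempty ∧ F.Finite ∧ F ⊆ vrm S ∧ ∀ p ∈ vrm S, p ∉ F → p ∉ box F

/-- `p` is a point on the `j`-th coordinate axis, different from the origin. -/
def OnAxis (j : Fin 3) (p : Fin 3 → ℝ) : Prop :=
  p ≠ 0 ∧ ∀ k, k ≠ j → p k = 0

/-- `S ⊆ ℝ³` is axial if it contains a point on each of the three coordinate axes. -/
def Axial (S : Set (Fin 3 → ℝ)) : Prop :=
  ∀ j : Fin 3, ∃ p ∈ S, ∀ k, k ≠ j → p k = 0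

/-- A finite axial set `S ⊆ ℝ³_{≥0}` is in general position if (i) each coordinate
plane contains exactly two points of `S`, neither at the origin, lying on the two
coordinate axes contained in that plane, and (ii) every other plane parallel to a
coordinate plane contains at most one point of `S`. -/
def GeneralPosition (S : Set (Fin 3 → ℝ)) : Prop :=
  (∀ i : Fin 3, ∃ p q : Fin 3 → ℝ, p ≠ q ∧ {r | r ∈ S ∧ r i = 0} = {p, q} ∧
    ∃ j k : Fin 3, j ≠ i ∧ k ≠ i ∧ j ≠ k ∧ OnAxis j p ∧ OnAxis k q) ∧
  (∀ i : Fin 3, ∀ c : ℝ, c ≠ 0 → {r | r ∈ S ∧ r i = c}.Subsingleton)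

/-- The rank-1 lattice `Γ(a,b,N) = {m₁·(1,a,b) + m₂·(0,N,0) + m₃·(0,0,N)} ⊆ ℝ³`. -/
def Gamma (a b N : ℤ) : Set (Fin 3 → ℝ) :=
  {p | ∃ m₁ m₂ m₃ : ℤ,
    p = ![(m₁ : ℝ), (m₁ : ℝ) * a + (m₂ : ℝ) * N, (m₁ : ℝ) * b + (m₃ : ℝ) * N]}

/-- `|Γ| = {(|x₁|,…,|xₙ|) : x ∈ Γ} \ {0}`. -/
def absSet {n : ℕ} (L : Set (Fin n → ℝ)) : Set (Fin n → ℝ) :=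
  {q | (∃ p ∈ L, ∀ i, q i = |p i|) ∧ q ≠ 0}

/-- `|x|_N = min(x mod N, (−x) mod N)`, the distance from `x` to the nearest
multiple of `N`. -/
def distN (N x : ℤ) : ℤ := min (x % N) ((-x) % N)

lemma distN_nonneg (N y : ℤ) (hN : 0 < N) : 0 ≤ distN N y :=
  le_min (Int.emod_nonneg _ hN.ne') (Int.emod_nonneg _ hN.ne')

lemma distN_rep (N y j r : ℤ) (hy : y = j * N + r)
    (h0 : 0 < r) (h2 : 2 * r ≤ N) : distN N y = r := by
  have hrN : r < N := by linarith
  have h1 : y % N = r := by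
    rw [hy, show j * N + r = r + N * j by ring, Int.add_mul_emod_self_left,
      Int.emod_eq_of_lt h0.le hrN]
  have h2' : (-y) % N = N - r := by
    rw [hy, show -(j * N + r) = (N - r) + N * (-j - 1) by ring,
      Int.add_mul_emod_self_left, Int.emod_eq_of_lt (by linarith) (by linarith)]
  unfold distN
  rw [h1, h2']
  exact min_eq_left (by linarith)

lemma distN_neg (N y : ℤ) : distN N (-y) = distN N y := by
  unfold distN; rw [neg_neg, min_comm]

lemma distN_le_self (N y : ℤ) (h0 : 0 ≤ y) (hyN : y < N) : distN N y ≤ y := by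
  unfold distN
  rw [Int.emod_eq_of_lt h0 hyN]
  exact min_le_left _ _

lemma two_distN_le (N y : ℤ) (hN : 0 < N) : 2 * distN N y ≤ N := by
  have h1 := Int.emod_nonneg y hN.ne'
  have h2 := Int.emod_nonneg (-y) hN.ne'
  have h3 : y % N < N := Int.emod_lt_of_pos _ hN
  have h4 : (-y) % N < N := Int.emod_lt_of_pos _ hN
  have h5 : (y % N + (-y) % N) % N = 0 := by
    rw [← Int.add_emod]; simp
  obtain ⟨c, hc⟩ := Int.dvd_of_emod_eq_zero h5
  have hcN : N * c ≤ N * 1 := mul_le_mul_of_nonneg_left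
    (by linarith [lt_of_mul_lt_mul_left (by linarith : N * c < N * 2) hN.le]) hN.le
  have hmin1 : distN N y ≤ y % N := min_le_left _ _
  have hmin2 : distN N y ≤ (-y) % N := min_le_right _ _
  linarith


set_option maxHeartbeats 1000000 in
/-- Classification of relative minima of the third type: if `x` lies in one of
the intervals `I_{k,3}`, then `|bx|_N ≤ α`. Here `b = b(t) = αat + β`,
`N = N(t,u) = b(au + γ) + α`, `t ≥ 1`, `u ≥ 0`. -/
theorem relative_minimum_third_type
    (a α β γ : ℤ) (ha : 1 ≤ a) (hα : 1 ≤ α)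
    (hβ : 0 ≤ β ∧ β < α * a) (hγ : 0 ≤ γ ∧ γ < a)
    (hcop1 : Int.gcd α β = 1) (hcop2 : Int.gcd a (α + β * γ) = 1)
    (t u : ℤ) (ht : 1 ≤ t) (hu : 0 ≤ u)
    (b N : ℤ) (hb : b = α * a * t + β) (hN : N = b * (a * u + γ) + α)
    (x : ℤ)
    (hmin : ![(x : ℝ), (distN N (a * x) : ℝ), (distN N (b * x) : ℝ)]
      ∈ vrm (absSet (Gamma a b N)))
    (hx : (∃ k : ℤ, Even k ∧ 0 ≤ k ∧ k ≤ a - 1 ∧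
        ((k : ℝ) * N) / (2 * a) + ((a * u + γ : ℤ) : ℝ) ≤ (x : ℝ) ∧
        (x : ℝ) < (((k : ℝ) + 1) * N) / (2 * a)) ∨
      (∃ k : ℤ, Odd k ∧ 0 ≤ k ∧ k ≤ a - 1 ∧
        ((k : ℝ) * N) / (2 * a) ≤ (x : ℝ) ∧
        (x : ℝ) < (((k : ℝ) + 1) * N) / (2 * a) - ((a * u + γ : ℤ) : ℝ))) :
    distN N (b * x) ≤ α := by
  by_contra hcon
  push_neg at hcon
  set M : ℤ := a * u + γ with hMdef
  have hM0 : 0 ≤ M := by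
    have h1 : 0 ≤ a * u := mul_nonneg (by linarith) hu
    have := hγ.1; omega
  have h1' : 0 < α * a * t := mul_pos (mul_pos (by linarith) (by linarith)) (by linarith)
  have hb0 : 0 < b := by rw [hb]; linarith [hβ.1]
  have hat1 : 1 ≤ α * t := by nlinarith
  have hab : a ≤ b := by
    have := mul_le_mul_of_nonneg_left hat1 (by linarith : (0:ℤ) ≤ a)
    rw [hb]; nlinarith [hβ.1]
  have hNbM : N = b * M + α := by rw [hN]
  have hN0 : 0 < N := by nlinarith [mul_nonneg hb0.le hM0]
  have hN2 : 2 * α + 2 ≤ N := by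
    have hdbx := two_distN_le N (b * x) hN0
    omega
  have hM1 : 1 ≤ M := by
    by_contra h
    push_neg at h
    have : b * M ≤ 0 := mul_nonpos_of_nonneg_of_nonpos hb0.le (by linarith)
    linarith
  have haM1 : 1 ≤ a * M := by
    have := mul_pos (show (0:ℤ) < a by linarith) (show (0:ℤ) < M by linarith)
    linarith
  have haMN : a * M < N := by
    have := mul_le_mul_of_nonneg_right hab hM0
    linarith
  have h2a : (0:ℝ) < 2 * (a:ℝ) := by
    have : (1:ℝ) ≤ (a:ℝ) := by exact_mod_cast ha
    linarith
  -- key facts from the interval hypothesis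
  have key : M ≤ x ∧ a * M ≤ distN N (a * x) := by
    rcases hx with ⟨k, hke, hk0, -, h1, h2⟩ | ⟨k, hko, hk0, -, h1, h2⟩
    · obtain ⟨j, hj⟩ := hke
      subst hj
      have hj0 : 0 ≤ j := by omega
      have h1z : (j + j) * N ≤ (x - M) * (2 * a) := by
        have hr : ((j + j : ℤ) : ℝ) * (N:ℤ) ≤ ((x:ℝ) - (M:ℤ)) * (2 * (a:ℝ)) := by
          rw [← div_le_iff₀ h2a]
          push_cast
          push_cast at h1
          linarith
        exact_mod_cast hr
      have h2z : x * (2 * a) < ((j + j) + 1) * N := by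
        have hr : (x:ℝ) * (2 * (a:ℝ)) < (((j + j : ℤ) : ℝ) + 1) * (N:ℤ) := by
          rw [← lt_div_iff₀ h2a]
          push_cast
          push_cast at h2
          linarith
        exact_mod_cast hr
      have hr1 : a * M ≤ a * x - j * N := by nlinarith [h1z]
      have hr2 : 2 * (a * x - j * N) ≤ N := by nlinarith [h2z]
      have hax : distN N (a * x) = a * x - j * N :=
        distN_rep N (a * x) j (a * x - j * N) (by ring) (by linarith) hr2
      constructor
      · have hjN : 0 ≤ j * N := mul_nonneg hj0 hN0.le
        have : a * M ≤ a * x := by linarith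
        exact le_of_mul_le_mul_left this (by linarith)
      · rw [hax]; exact hr1
    · obtain ⟨j, hj⟩ := hko
      subst hj
      have hj0 : 0 ≤ j := by omega
      have h1z : (2 * j + 1) * N ≤ x * (2 * a) := by
        have hr : ((2 * j + 1 : ℤ) : ℝ) * (N:ℤ) ≤ (x:ℝ) * (2 * (a:ℝ)) := by
          rw [← div_le_iff₀ h2a]
          push_cast
          push_cast at h1
          linarith
        exact_mod_cast hr
      have h2z : (x + M) * (2 * a) < ((2 * j + 1) + 1) * N := by
        have hr : ((x:ℝ) + (M:ℤ)) * (2 * (a:ℝ)) < (((2 * j + 1 : ℤ) : ℝ) + 1) * (N:ℤ) := by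
          rw [← lt_div_iff₀ h2a]
          push_cast
          push_cast at h2
          linarith
        exact_mod_cast hr
      have hs1 : a * M < (j + 1) * N - a * x := by nlinarith [h2z]
      have hs2 : 2 * ((j + 1) * N - a * x) ≤ N := by nlinarith [h1z]
      have hax : distN N (a * x) = (j + 1) * N - a * x := by
        rw [← distN_neg]
        exact distN_rep N (-(a * x)) (-(j + 1)) ((j + 1) * N - a * x) (by ring)
          (by linarith) hs2
      constructor
      · have hjN : 0 ≤ j * N := mul_nonneg hj0 hN0.le
        have : a * M < a * x := by nlinarith [hs1, hs2, h1z, hjN]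
        exact (lt_of_mul_lt_mul_left this (by linarith)).le
      · rw [hax]; linarith
  -- the comparison lattice point
  set m₂ : ℤ := if 2 * (a * M) ≤ N then 0 else -1 with hm2
  have e1 : (a * M) % N = a * M := Int.emod_eq_of_lt (by linarith) haMN
  have e2 : (-(a * M)) % N = N - a * M := by
    rw [show -(a * M) = (N - a * M) + N * (-1) by ring, Int.add_mul_emod_self_left,
      Int.emod_eq_of_lt (by linarith) (by linarith)]
  have habs2 : |(M * a + m₂ * N : ℤ)| = distN N (a * M) := by
    unfold distN
    rw [e1, e2, hm2]
    split_ifs with h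
    · rw [min_eq_left (by linarith)]
      simp only [zero_mul, add_zero]
      rw [abs_of_nonneg (by nlinarith)]
      ring
    · push_neg at h
      rw [min_eq_right (by linarith)]
      rw [show M * a + (-1) * N = -(N - a * M) by ring, abs_neg,
        abs_of_nonneg (by linarith)]
  have habs3 : |(M * b + (-1) * N : ℤ)| = α := by
    rw [show M * b + (-1) * N = -α by rw [hNbM]; ring, abs_neg, abs_of_nonneg (by linarith)]
  set p : Fin 3 → ℝ := ![(M : ℝ), ((distN N (a * M) : ℤ) : ℝ), ((α : ℤ) : ℝ)] with hp
  have hpmem : p ∈ absSet (Gamma a b N) := by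
    constructor
    · refine ⟨![((M:ℤ) : ℝ), ((M:ℤ) : ℝ) * (a:ℤ) + ((m₂:ℤ) : ℝ) * (N:ℤ),
        ((M:ℤ) : ℝ) * (b:ℤ) + ((-1:ℤ) : ℝ) * (N:ℤ)], ⟨M, m₂, -1, rfl⟩, ?_⟩
      intro i
      fin_cases i
      · show (M:ℝ) = |(M:ℝ)|
        rw [abs_of_nonneg (by exact_mod_cast hM0)]
      · show ((distN N (a * M) : ℤ) : ℝ) = |((M:ℤ) : ℝ) * (a:ℤ) + ((m₂:ℤ) : ℝ) * (N:ℤ)|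
        rw [← habs2]
        push_cast
        ring_nf
      · show ((α : ℤ) : ℝ) = |((M:ℤ) : ℝ) * (b:ℤ) + ((-1:ℤ) : ℝ) * (N:ℤ)|
        rw [← habs3]
        push_cast
        ring_nf
    · intro h
      have h0 := congrFun h 0
      have : (M:ℝ) = 0 := by simpa [hp] using h0
      have : M = 0 := by exact_mod_cast this
      omega
  have hpne : p ≠ ![(x : ℝ), (distN N (a * x) : ℝ), (distN N (b * x) : ℝ)] := by
    intro h
    have h2 := congrFun h 2
    simp only [hp, Matrix.cons_val_two, Matrix.tail_cons, Matrix.head_cons] at h2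
    have : α = distN N (b * x) := by exact_mod_cast h2
    omega
  have hpbox : p ∈ box {![(x : ℝ), (distN N (a * x) : ℝ), (distN N (b * x) : ℝ)]} := by
    rw [hp]
    intro i
    rw [Set.image_singleton, csSup_singleton]
    have hd0 : (0:ℤ) ≤ distN N (a * M) := distN_nonneg N (a * M) hN0
    have hdle : distN N (a * M) ≤ distN N (a * x) :=
      le_trans (distN_le_self N (a * M) (by linarith) haMN) key.2
    fin_cases i
    · constructor
      · show (0:ℝ) ≤ (M:ℝ)
        exact_mod_cast hM0
      · show (M:ℝ) ≤ (x:ℝ)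
        exact_mod_cast key.1
    · constructor
      · show (0:ℝ) ≤ ((distN N (a * M) : ℤ) : ℝ)
        exact_mod_cast hd0
      · show ((distN N (a * M) : ℤ) : ℝ) ≤ ((distN N (a * x) : ℤ) : ℝ)
        exact_mod_cast hdle
    · constructor
      · show (0:ℝ) ≤ ((α : ℤ) : ℝ)
        exact_mod_cast (by linarith : (0:ℤ) ≤ α)
      · show ((α : ℤ) : ℝ) ≤ ((distN N (b * x) : ℤ) : ℝ)
        exact_mod_cast hcon.le
  exact hmin.2 p hpmem hpne hpbox
end

section
/- Let b and N be coprime positive integers with 2b ≤ N, and let b/N = [0; a₁, …, a_s] be the regular continued fraction expansion of b/N (with a_s ≥ 2 when s ≥ 1). Then the set vrm(|Γ(1,b,N)|) has exactly s + 3 elements. -/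
/-- The value of a (finite) regular continued fraction `[c₀; c₁, …, c_s]`
given as a list of its partial quotients. -/
def cfVal : List ℤ → ℚ
  | [] => 0
  | [c] => (c : ℚ)
  | c :: d :: rest => (c : ℚ) + 1 / cfVal (d :: rest)

/-- `IsRegularCF r l` : the list `l = [c₀, c₁, …, c_s]` is the regular continued
fraction expansion of the rational `r`. -/
def IsRegularCF (r : ℚ) (l : List ℤ) : Prop :=
  l ≠ [] ∧ (∀ c ∈ l.head?, 0 ≤ c) ∧ (∀ c ∈ l.tail, 1 ≤ c) ∧
    (2 ≤ l.length → ∀ c ∈ l.getLast?, 2 ≤ c) ∧ cfVal l = r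



/-- helper: embed integer triple into `Fin 3 → ℝ`. -/
def emb (x y z : ℤ) : Fin 3 → ℝ := ![(x : ℝ), (y : ℝ), (z : ℝ)]

@[simp] lemma emb_zero (x y z : ℤ) : emb x y z 0 = (x : ℝ) := rfl
@[simp] lemma emb_one (x y z : ℤ) : emb x y z 1 = (y : ℝ) := rfl
@[simp] lemma emb_two (x y z : ℤ) : emb x y z 2 = (z : ℝ) := rfl

lemma emb_inj {x y z x' y' z' : ℤ} (h : emb x y z = emb x' y' z') :
    x = x' ∧ y = y' ∧ z = z' := by
  refine ⟨?_, ?_, ?_⟩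
  · have := congrFun h 0; rw [emb_zero, emb_zero] at this; exact_mod_cast this
  · have := congrFun h 1; rw [emb_one, emb_one] at this; exact_mod_cast this
  · have := congrFun h 2; rw [emb_two, emb_two] at this; exact_mod_cast this

lemma emb_ne_zero {x y z : ℤ} (h : ¬(x = 0 ∧ y = 0 ∧ z = 0)) : emb x y z ≠ 0 := by
  intro h0
  apply h
  refine ⟨?_, ?_, ?_⟩
  · have := congrFun h0 0; rw [emb_zero] at this; simp at this; exact_mod_cast this
  · have := congrFun h0 1; rw [emb_one] at this; simp at this; exact_mod_cast this
  · have := congrFun h0 2; rw [emb_two] at this; simp at this; exact_mod_cast this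

lemma abs_add_eq_of_mul_nonneg {x y : ℤ} (h : 0 ≤ x * y) : |x + y| = |x| + |y| := by
  rcases le_total 0 x with hx | hx <;> rcases le_total 0 y with hy | hy
  · rw [abs_of_nonneg hx, abs_of_nonneg hy, abs_of_nonneg (by omega)]
  · have : x = 0 ∨ y = 0 := by
      by_contra hc
      push_neg at hc
      have hx' : 0 < x := lt_of_le_of_ne hx (Ne.symm hc.1)
      have hy' : y < 0 := lt_of_le_of_ne hy hc.2
      nlinarith
    rcases this with h1 | h1 <;> simp [h1]
  · have : x = 0 ∨ y = 0 := by
      by_contra hc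
      push_neg at hc
      have hx' : x < 0 := lt_of_le_of_ne hx hc.1
      have hy' : 0 < y := lt_of_le_of_ne hy (Ne.symm hc.2)
      nlinarith
    rcases this with h1 | h1 <;> simp [h1]
  · rw [abs_of_nonpos hx, abs_of_nonpos hy, abs_of_nonpos (by omega)]; ring

/-- The key arithmetic lemma: given two consecutive "convergent" vectors
`(P,e)`, `(P',e')` of the lattice `{(m,c) : N ∣ c - m b}`, any nonzero `m`
with `|m| < P'` has `|c| ≥ |e|`, with near-equality forcing `|m| = P`. -/
lemma key (N b P P' e e' : ℤ) (hN0 : 0 < N)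
    (h1 : N ∣ P * b - e) (h2 : N ∣ P' * b - e')
    (hdet : P' * e - P * e' = N ∨ P' * e - P * e' = -N)
    (hsgn : e * e' ≤ 0) (hP : 1 ≤ P) (hPP' : P < P') (he : 1 ≤ |e|)
    (hlastc : e' = 0 → 2 * P ≤ P')
    (m c : ℤ) (hmc : N ∣ c - m * b) (hm : m ≠ 0) (hmP' : |m| < P') :
    |e| ≤ |c| ∧ (|m| ≤ P → |c| ≤ |e| → |m| = P) := by
  have hN : 0 < N := hN0
  set D := P' * e - P * e' with hD
  have hDne : D ≠ 0 := by rcases hdet with h | h <;> omega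
  have d1 : N ∣ c * P' - m * e' := by
    have hh : c * P' - m * e' = (c - m * b) * P' + m * (P' * b - e') := by ring
    rw [hh]; exact dvd_add (hmc.mul_right _) (h2.mul_left _)
  have d2 : N ∣ m * e - c * P := by
    have hh : m * e - c * P = -((c - m * b) * P + m * (P * b - e)) := by ring
    rw [hh]; exact dvd_neg.mpr (dvd_add (hmc.mul_right _) (h1.mul_left _))
  have dD1 : D ∣ c * P' - m * e' := by
    rcases hdet with h | h
    · rw [h]; exact d1
    · rw [h]; exact (neg_dvd).mpr d1
  have dD2 : D ∣ m * e - c * P := by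
    rcases hdet with h | h
    · rw [h]; exact d2
    · rw [h]; exact (neg_dvd).mpr d2
  set u := (c * P' - m * e') / D with hu_def
  set v := (m * e - c * P) / D with hv_def
  have hu : u * D = c * P' - m * e' := Int.ediv_mul_cancel dD1
  have hv : v * D = m * e - c * P := Int.ediv_mul_cancel dD2
  have hmuv : m = u * P + v * P' := by
    have h1' : m * D = (u * P + v * P') * D := by
      calc m * D = (c * P' - m * e') * P + (m * e - c * P) * P' := by rw [hD]; ring
      _ = (u * D) * P + (v * D) * P' := by rw [hu, hv]
      _ = (u * P + v * P') * D := by ring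
    exact mul_right_cancel₀ hDne h1'
  have hcuv : c = u * e + v * e' := by
    have h1' : c * D = (u * e + v * e') * D := by
      calc c * D = (c * P' - m * e') * e + (m * e - c * P) * e' := by rw [hD]; ring
      _ = (u * D) * e + (v * D) * e' := by rw [hu, hv]
      _ = (u * e + v * e') * D := by ring
    exact mul_right_cancel₀ hDne h1'
  have hPpos : (0:ℤ) < P := hP
  have hP'pos : (0:ℤ) < P' := by omega
  rcases eq_or_ne v 0 with hv0 | hv0
  · -- v = 0 : m = u * P, c = u * e
    have hmu : m = u * P := by rw [hmuv, hv0]; ring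
    have hcu : c = u * e := by rw [hcuv, hv0]; ring
    have hu0 : u ≠ 0 := by
      intro h0; apply hm; rw [hmu, h0]; ring
    have h1u : 1 ≤ |u| := Int.one_le_abs hu0
    have hce : |c| = |u| * |e| := by rw [hcu, abs_mul]
    constructor
    · rw [hce]; nlinarith [abs_nonneg e]
    · intro _ hle
      have hu1 : |u| = 1 := by
        rw [hce] at hle; nlinarith
      rw [hmu, abs_mul, hu1, abs_of_pos hPpos, one_mul]
  · rcases eq_or_ne u 0 with hu0 | hu0
    · -- u = 0 : m = v * P'
      exfalso
      have hmv : m = v * P' := by rw [hmuv, hu0]; ring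
      have h1v : 1 ≤ |v| := Int.one_le_abs hv0
      have : P' ≤ |m| := by
        rw [hmv, abs_mul, abs_of_pos hP'pos]; nlinarith
      omega
    · have h1u : 1 ≤ |u| := Int.one_le_abs hu0
      have h1v : 1 ≤ |v| := Int.one_le_abs hv0
      rcases lt_or_gt_of_ne (show u * v ≠ 0 from mul_ne_zero hu0 hv0) with huv | huv
      · -- u*v < 0 : the signs of u*e and v*e' agree
        have hsg : 0 ≤ (u * e) * (v * e') := by nlinarith
        have hce : |c| = |u| * |e| + |v| * |e'| := by
          rw [hcuv, abs_add_eq_of_mul_nonneg hsg, abs_mul, abs_mul]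
        have hA : |e| ≤ |u| * |e| := le_mul_of_one_le_left (abs_nonneg e) h1u
        have hB : |e'| ≤ |v| * |e'| := le_mul_of_one_le_left (abs_nonneg e') h1v
        constructor
        · rw [hce]; linarith [abs_nonneg e']
        · intro hmP hle
          rw [hce] at hle
          have hve' : |v| * |e'| = 0 := by linarith [abs_nonneg e']
          have he'0 : e' = 0 := by
            have : |e'| = 0 := by linarith [abs_nonneg e']
            exact abs_eq_zero.mp this
          have hu1 : |u| = 1 := by
            by_contra hc
            have h2u : 2 ≤ |u| := by omega
            have := mul_le_mul_of_nonneg_right h2u (abs_nonneg e)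
            linarith
          have h2P : 2 * P ≤ P' := hlastc he'0
          have h5 : |v * P'| ≤ |m| + |u * P| := by
            have hvp : v * P' = m + -(u * P) := by linarith [hmuv]
            rw [hvp]
            calc |m + -(u * P)| ≤ |m| + |-(u * P)| := abs_add_le _ _
            _ = |m| + |u * P| := by rw [abs_neg]
          have h6 : |v * P'| = |v| * P' := by rw [abs_mul, abs_of_pos hP'pos]
          have h7 : |u * P| = P := by rw [abs_mul, hu1, abs_of_pos hPpos, one_mul]
          have : P' - P ≤ |m| := by rw [h6] at h5; rw [h7] at h5; nlinarith
          omega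
      · -- u*v > 0 : |m| ≥ P', contradiction
        exfalso
        have hsg : 0 ≤ (u * P) * (v * P') := by
          have := mul_pos (mul_pos hPpos hP'pos) huv
          nlinarith
        have hmm : |m| = |u| * P + |v| * P' := by
          rw [hmuv, abs_add_eq_of_mul_nonneg hsg, abs_mul, abs_mul,
            abs_of_pos hPpos, abs_of_pos hP'pos]
        have hx1 : 1 * P ≤ |u| * P := mul_le_mul_of_nonneg_right h1u (le_of_lt hPpos)
        have hx2 : 1 * P' ≤ |v| * P' := mul_le_mul_of_nonneg_right h1v (le_of_lt hP'pos)
        linarith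

def EuclidRem : List ℤ → ℤ → ℤ → Prop
  | [], rp, r => rp = 1 ∧ r = 0
  | c :: t, rp, r => EuclidRem t r (rp - c * r) ∧ 0 ≤ rp - c * r ∧ rp - c * r < r

def ptsL : List ℤ → ℤ → ℤ → ℤ → ℤ → List (ℤ × ℤ)
  | [], _, _, _, _ => []
  | c :: t, rp, r, P, Pm => (P, r) :: ptsL t r (rp - c * r) (c * P + Pm) P

lemma ptsL_length : ∀ (y : List ℤ) (rp r P Pm : ℤ), (ptsL y rp r P Pm).length = y.length
  | [], _, _, _, _ => rfl
  | c :: t, rp, r, P, Pm => by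
    simp only [ptsL, List.length_cons, ptsL_length t]

structure InvSt (b N : ℤ) (y : List ℤ) (rp r P Pm σ : ℤ) : Prop where
  euc : EuclidRem y rp r
  hσ : σ = 1 ∨ σ = -1
  hr0 : 0 ≤ r
  hrrp : r < rp
  hPm0 : 0 ≤ Pm
  hPmP : Pm < P
  hdet : P * rp + Pm * r = N
  hdvd1 : N ∣ P * b - σ * r
  hdvd2 : N ∣ Pm * b + σ * rp
  hfirst : 1 ≤ Pm ∨ 2 * r ≤ rp
  hlast : ∀ x ∈ y.getLast?, 2 ≤ x

namespace InvSt

variable {b N : ℤ} {y : List ℤ} {rp r P Pm σ : ℤ}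

lemma hP1 (h : InvSt b N y rp r P Pm σ) : 1 ≤ P := by have := h.hPm0; have := h.hPmP; omega

lemma hN (h : InvSt b N y rp r P Pm σ) : 0 < N := by
  have h1 := h.hP1
  have h2 := h.hrrp
  have h3 := h.hr0
  have h4 := h.hPm0
  have h5 := h.hdet
  nlinarith

lemma hrpN (h : InvSt b N y rp r P Pm σ) : rp ≤ N := by
  have h1 := h.hP1
  have h2 := h.hrrp
  have h3 := h.hr0
  have h4 := h.hPm0
  have h5 := h.hdet
  nlinarith

/-- Final state: the list is exhausted, `P = N`. -/
lemma final (h : InvSt b N [] rp r P Pm σ) : P = N ∧ r = 0 ∧ rp = 1 := by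
  obtain ⟨h1, h2⟩ := h.euc
  have := h.hdet
  constructor
  · subst h1 h2; linarith
  · exact ⟨h2, h1⟩

/-- In a non-final state, the remainder is still positive and `2 P ≤ N`. -/
lemma cons_facts {c : ℤ} {t : List ℤ} (h : InvSt b N (c :: t) rp r P Pm σ) :
    1 ≤ r ∧ 2 * P ≤ N ∧ P < N ∧ r < N ∧ 1 ≤ c := by
  obtain ⟨he, h1, h2⟩ := h.euc
  have hrrp := h.hrrp
  have hr1 : 1 ≤ r := by omega
  have hc1 : 1 ≤ c := by nlinarith
  have hrp2 : 2 ≤ rp := by omega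
  have hdet := h.hdet
  have hPm0 := h.hPm0
  have hr0 := h.hr0
  have hP1 := h.hP1
  have h2P : 2 * P ≤ N := by nlinarith
  exact ⟨hr1, h2P, by nlinarith, by have := h.hrpN; omega, hc1⟩

/-- The inductive step. -/
lemma step {c : ℤ} {t : List ℤ} (h : InvSt b N (c :: t) rp r P Pm σ) :
    InvSt b N t r (rp - c * r) (c * P + Pm) P (-σ) ∧ P < c * P + Pm := by
  obtain ⟨he, h1, h2⟩ := h.euc
  obtain ⟨hr1, -, -, -, hc1⟩ := h.cons_facts
  have hP1 := h.hP1
  have hstep : P < c * P + Pm := by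
    rcases h.hfirst with hf | hf
    · nlinarith
    · have hc2 : 2 ≤ c := by nlinarith [h.hrrp]
      nlinarith [h.hPm0]
  refine ⟨⟨he, ?_, h1, h2, le_of_lt (lt_of_le_of_lt h.hPm0 h.hPmP), hstep, ?_, ?_, ?_, ?_, ?_⟩, hstep⟩
  · rcases h.hσ with h' | h' <;> simp [h']
  · -- determinant
    have := h.hdet; ring_nf; nlinarith [h.hdet]
  · -- N ∣ (c*P + Pm) * b - (-σ) * (rp - c * r)
    have d1 := h.hdvd1
    have d2 := h.hdvd2
    have : (c * P + Pm) * b - (-σ) * (rp - c * r) = c * (P * b - σ * r) + (Pm * b + σ * rp) := by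
      ring
    rw [this]
    exact dvd_add (d1.mul_left _) d2
  · -- N ∣ P * b + (-σ) * r
    have d1 := h.hdvd1
    have : P * b + (-σ) * r = P * b - σ * r := by ring
    rw [this]; exact d1
  · left; exact hP1
  · -- last entries
    intro x hx
    apply h.hlast
    cases t with
    | nil => simp at hx
    | cons d t' =>
      rw [List.getLast?_cons_cons]
      exact hx

end InvSt
lemma cfVal_ge_one : ∀ (t : List ℤ), t ≠ [] → (∀ c ∈ t, 1 ≤ c) → 1 ≤ cfVal t
  | [], h, _ => absurd rfl h
  | [c], _, h1 => by
    have : (1:ℤ) ≤ c := h1 c (by simp)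
    simp only [cfVal]
    exact_mod_cast this
  | c :: d :: rest, _, h1 => by
    have hc : (1:ℤ) ≤ c := h1 c (by simp)
    have ih : 1 ≤ cfVal (d :: rest) :=
      cfVal_ge_one (d :: rest) (by simp) (fun x hx => h1 x (by simp [hx]))
    have hpos : 0 < 1 / cfVal (d :: rest) := by positivity
    simp only [cfVal]
    have : (1:ℚ) ≤ (c : ℚ) := by exact_mod_cast hc
    linarith

lemma cfVal_gt_one : ∀ (t : List ℤ), t ≠ [] → (∀ c ∈ t, 1 ≤ c) →
    (∀ x ∈ t.getLast?, 2 ≤ x) → 1 < cfVal t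
  | [], h, _, _ => absurd rfl h
  | [c], _, _, h2 => by
    have : (2:ℤ) ≤ c := h2 c (by simp)
    simp only [cfVal]
    have : (2:ℚ) ≤ (c:ℚ) := by exact_mod_cast this
    linarith
  | c :: d :: rest, _, h1, _ => by
    have hc : (1:ℤ) ≤ c := h1 c (by simp)
    have ih : 1 ≤ cfVal (d :: rest) :=
      cfVal_ge_one (d :: rest) (by simp) (fun x hx => h1 x (by simp [hx]))
    have hpos : 0 < 1 / cfVal (d :: rest) := by positivity
    simp only [cfVal]
    have : (1:ℚ) ≤ (c : ℚ) := by exact_mod_cast hc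
    linarith

lemma euclid_of_cf : ∀ (t : List ℤ), t ≠ [] → (∀ c ∈ t, 1 ≤ c) →
    (∀ x ∈ t.getLast?, 2 ≤ x) → ∀ B R : ℤ, 0 < R → Int.gcd R B = 1 →
    cfVal t = (B : ℚ) / (R : ℚ) → EuclidRem t B R
  | [], h, _, _, _, _, _, _, _ => absurd rfl h
  | [c], _, _, _, B, R, hR, hgcd, hval => by
    have hRQ : (R:ℚ) ≠ 0 := by exact_mod_cast hR.ne'
    have hcB : c * R = B := by
      have : (c:ℚ) = (B:ℚ)/(R:ℚ) := hval
      have h2 : (c:ℚ) * R = B := by field_simp at this; linarith [this]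
      exact_mod_cast h2
    have hdvd : R ∣ B := ⟨c, by linarith [hcB, mul_comm c R]⟩
    have hR1 : R = 1 := by
      have h1 : R ∣ (Int.gcd R B : ℤ) := Int.dvd_coe_gcd dvd_rfl hdvd
      rw [hgcd] at h1
      exact Int.eq_one_of_dvd_one hR.le h1
    subst hR1
    have hBc : B = c := by linarith [hcB]
    refine ⟨⟨rfl, by omega⟩, by omega, by omega⟩
  | c :: d :: rest, _, h1, h2, B, R, hR, hgcd, hval => by
    have hW : 1 < cfVal (d :: rest) :=
      cfVal_gt_one (d :: rest) (by simp) (fun x hx => h1 x (by simp [hx]))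
        (fun x hx => h2 x (by rwa [List.getLast?_cons_cons]))
    have hWpos : (0:ℚ) < cfVal (d :: rest) := by linarith
    have hRQ : (R:ℚ) ≠ 0 := by exact_mod_cast hR.ne'
    set R' : ℤ := B - c * R with hR'def
    have hval' : 1 / cfVal (d :: rest) = (R' : ℚ) / (R : ℚ) := by
      have : (c:ℚ) + 1 / cfVal (d :: rest) = (B:ℚ)/(R:ℚ) := hval
      push_cast [hR'def]
      field_simp
      field_simp at this
      linarith
    have hR'pos : 0 < R' := by
      have h3 : (0:ℚ) < (R':ℚ)/(R:ℚ) := by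
        rw [← hval']
        positivity
      have h4 : (0:ℚ) < (R':ℚ) := by
        by_contra hc
        push_neg at hc
        have : (R':ℚ)/(R:ℚ) ≤ 0 := div_nonpos_of_nonpos_of_nonneg hc (by positivity)
        linarith
      exact_mod_cast h4
    have hR'R : R' < R := by
      have h3 : (R':ℚ)/(R:ℚ) < 1 := by
        rw [← hval']
        rw [div_lt_one hWpos]
        linarith
      have h4 : (R':ℚ) < (R:ℚ) := by
        rw [div_lt_one (by exact_mod_cast hR)] at h3
        exact h3
      exact_mod_cast h4
    have hgcd2 : Int.gcd R' R = 1 := by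
      have d1 : (Int.gcd R' R : ℤ) ∣ R' := Int.gcd_dvd_left R' R
      have d2 : (Int.gcd R' R : ℤ) ∣ R := Int.gcd_dvd_right R' R
      have dB : (Int.gcd R' R : ℤ) ∣ B := by
        have hB : B = R' + c * R := by rw [hR'def]; ring
        rw [hB]
        exact dvd_add d1 (d2.mul_left c)
      have dg : (Int.gcd R' R : ℤ) ∣ (Int.gcd R B : ℤ) := Int.dvd_coe_gcd d2 dB
      rw [hgcd] at dg
      have : (Int.gcd R' R : ℤ) = 1 := Int.eq_one_of_dvd_one (by positivity) (by exact_mod_cast dg)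
      exact_mod_cast this
    have hvalrec : cfVal (d :: rest) = (R : ℚ) / (R' : ℚ) := by
      have hR'Q : (R':ℚ) ≠ 0 := by exact_mod_cast hR'pos.ne'
      have hWne : cfVal (d :: rest) ≠ 0 := hWpos.ne'
      field_simp at hval' ⊢
      linarith [hval']
    have ih : EuclidRem (d :: rest) R R' :=
      euclid_of_cf (d :: rest) (by simp) (fun x hx => h1 x (by simp [hx]))
        (fun x hx => h2 x (by rwa [List.getLast?_cons_cons])) R R' hR'pos hgcd2 hvalrec
    exact ⟨by rwa [← hR'def], by omega, by omega⟩
/-- Decompose the regular CF of b/N. -/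
lemma cf_top (b N : ℤ) (hb : 1 ≤ b) (hbN : 2 * b ≤ N) (hcop : Int.gcd b N = 1)
    (l : List ℤ) (hl : IsRegularCF ((b : ℚ) / (N : ℚ)) l) :
    ∃ a : List ℤ, l = 0 :: a ∧ a ≠ [] ∧ (∀ x ∈ a.getLast?, 2 ≤ x) ∧ EuclidRem a N b := by
  obtain ⟨hne, hhead, htail, hlst, hval⟩ := hl
  have hbQ : (0:ℚ) < (b:ℚ) := by exact_mod_cast hb
  have hNZ : 1 ≤ N := by omega
  have hNQ : (0:ℚ) < (N:ℚ) := by exact_mod_cast hNZ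
  have hbN' : b < N := by omega
  have hfrac1 : (b:ℚ)/(N:ℚ) < 1 := by
    rw [div_lt_one hNQ]
    exact_mod_cast hbN'
  have hfrac0 : (0:ℚ) < (b:ℚ)/(N:ℚ) := by positivity
  cases l with
  | nil => exact absurd rfl hne
  | cons c0 a =>
    cases a with
    | nil =>
      exfalso
      have h1 : (c0 : ℚ) = (b:ℚ)/(N:ℚ) := hval
      have h2 : (0:ℚ) < (c0:ℚ) := by rw [h1]; exact hfrac0
      have h3 : (c0:ℚ) < 1 := by rw [h1]; exact hfrac1
      have h4 : 0 < c0 := by exact_mod_cast h2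
      have h5 : c0 < 1 := by exact_mod_cast h3
      omega
    | cons d t =>
      have hae : (d :: t) ≠ [] := by simp
      have htail' : ∀ c ∈ (d :: t), 1 ≤ c := by
        intro c hc
        exact htail c (by simpa using hc)
      have hlast' : ∀ x ∈ (d :: t).getLast?, 2 ≤ x := by
        intro x hx
        apply hlst (by simp)
        rwa [List.getLast?_cons_cons]
      have hW1 : 1 ≤ cfVal (d :: t) := cfVal_ge_one _ hae htail'
      have hWpos : (0:ℚ) < cfVal (d :: t) := by linarith
      have hv : (c0:ℚ) + 1 / cfVal (d :: t) = (b:ℚ)/(N:ℚ) := hval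
      have hinv : (0:ℚ) < 1 / cfVal (d :: t) := by positivity
      have hinv1 : 1 / cfVal (d :: t) ≤ 1 := by
        rw [div_le_one hWpos]; exact hW1
      have hc00 : c0 = 0 := by
        have h2 : (c0:ℚ) < 1 := by linarith
        have h3 : (-1:ℚ) < (c0:ℚ) := by linarith
        have h4 : c0 < 1 := by exact_mod_cast h2
        have h5 : -1 < c0 := by exact_mod_cast h3
        omega
    
      have hvala : cfVal (d :: t) = (N:ℚ)/(b:ℚ) := by
        rw [hc00] at hv
        push_cast at hv
        rw [zero_add] at hv
        calc cfVal (d :: t) = (1 / cfVal (d :: t))⁻¹ := by rw [one_div, inv_inv]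
        _ = ((b:ℚ)/(N:ℚ))⁻¹ := by rw [hv]
        _ = (N:ℚ)/(b:ℚ) := by rw [inv_div]
      refine ⟨d :: t, by rw [hc00], hae, hlast', ?_⟩
      exact euclid_of_cf _ hae htail' hlast' N b (by omega) hcop hvala

/-- membership in `|Γ(1,b,N)|` in integer terms. -/
lemma mem_absSet_iff (b N : ℤ) (q : Fin 3 → ℝ) :
    q ∈ absSet (Gamma 1 b N) ↔
      (∃ m m2 m3 : ℤ, q = emb |m| |m + m2 * N| |m * b + m3 * N|) ∧ q ≠ 0 := by
  constructor
  · rintro ⟨⟨p, ⟨m1, m2, m3, rfl⟩, habs⟩, hne⟩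
    refine ⟨⟨m1, m2, m3, ?_⟩, hne⟩
    funext i
    fin_cases i
    · show q 0 = emb |m1| |m1 + m2 * N| |m1 * b + m3 * N| 0
      rw [emb_zero, habs 0]
      simp only [Matrix.cons_val_zero]
      push_cast
      ring_nf
    · show q 1 = emb |m1| |m1 + m2 * N| |m1 * b + m3 * N| 1
      rw [emb_one, habs 1]
      simp only [Matrix.cons_val_one, Matrix.head_cons]
      push_cast
      ring_nf
    · show q 2 = emb |m1| |m1 + m2 * N| |m1 * b + m3 * N| 2
      rw [emb_two, habs 2]
      simp only [Matrix.cons_val_two, Matrix.tail_cons, Matrix.head_cons]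
      push_cast
      ring_nf
  · rintro ⟨⟨m, m2, m3, rfl⟩, hne⟩
    refine ⟨⟨![(m:ℝ), (m:ℝ) * ((1:ℤ):ℝ) + (m2:ℝ) * (N:ℝ), (m:ℝ) * (b:ℝ) + (m3:ℝ) * (N:ℝ)],
      ⟨m, m2, m3, rfl⟩, ?_⟩, hne⟩
    intro i
    fin_cases i
    · show emb |m| |m + m2 * N| |m * b + m3 * N| 0 = |(m:ℝ)|
      rw [emb_zero]
      push_cast
      ring_nf
    · show emb |m| |m + m2 * N| |m * b + m3 * N| 1 = |(m:ℝ) * ((1:ℤ):ℝ) + (m2:ℝ) * (N:ℝ)|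
      rw [emb_one]
      push_cast
      ring_nf
    · show emb |m| |m + m2 * N| |m * b + m3 * N| 2 = |(m:ℝ) * (b:ℝ) + (m3:ℝ) * (N:ℝ)|
      rw [emb_two]
      push_cast
      ring_nf

lemma mem_box_singleton {γ p : Fin 3 → ℝ} : p ∈ box {γ} ↔ ∀ i, 0 ≤ p i ∧ p i ≤ γ i := by
  unfold box
  simp only [Set.mem_setOf_eq, Set.image_singleton, csSup_singleton]

lemma emb_box_iff {x y z X Y Z : ℤ} (hx : 0 ≤ x) (hy : 0 ≤ y) (hz : 0 ≤ z) :
    emb x y z ∈ box {emb X Y Z} ↔ x ≤ X ∧ y ≤ Y ∧ z ≤ Z := by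
  rw [mem_box_singleton]
  constructor
  · intro h
    refine ⟨?_, ?_, ?_⟩
    · have := (h 0).2; rw [emb_zero, emb_zero] at this; exact_mod_cast this
    · have := (h 1).2; rw [emb_one, emb_one] at this; exact_mod_cast this
    · have := (h 2).2; rw [emb_two, emb_two] at this; exact_mod_cast this
  · rintro ⟨h1, h2, h3⟩ i
    fin_cases i
    · constructor
      · show (0:ℝ) ≤ emb x y z 0
        rw [emb_zero]; exact_mod_cast hx
      · show emb x y z 0 ≤ emb X Y Z 0
        rw [emb_zero, emb_zero]; exact_mod_cast h1
    · constructor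
      · show (0:ℝ) ≤ emb x y z 1
        rw [emb_one]; exact_mod_cast hy
      · show emb x y z 1 ≤ emb X Y Z 1
        rw [emb_one, emb_one]; exact_mod_cast h2
    · constructor
      · show (0:ℝ) ≤ emb x y z 2
        rw [emb_two]; exact_mod_cast hz
      · show emb x y z 2 ≤ emb X Y Z 2
        rw [emb_two, emb_two]; exact_mod_cast h3

lemma vrm_intro {n : ℕ} {S : Set (Fin n → ℝ)} {γ : Fin n → ℝ} (hγ : γ ∈ S)
    (h : ∀ p ∈ S, p ∈ box {γ} → p = γ) : γ ∈ vrm S :=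
  ⟨hγ, fun p hp hne hbox => hne (h p hp hbox)⟩

lemma vrm_box_eq {n : ℕ} {S : Set (Fin n → ℝ)} {γ p : Fin n → ℝ} (h : γ ∈ vrm S)
    (hp : p ∈ S) (hb : p ∈ box {γ}) : p = γ := by
  by_contra hne
  exact h.2 p hp hne hb

lemma emb_zero_eq : emb 0 0 0 = 0 := by
  funext i
  fin_cases i <;> simp [emb]
/-- The data needed to apply `key` at a non-final stage. -/
lemma stage_key {b N c₀ : ℤ} {t : List ℤ} {rp r P Pm σ : ℤ}
    (h : InvSt b N (c₀ :: t) rp r P Pm σ) :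
    ∀ m c : ℤ, N ∣ c - m * b → m ≠ 0 → |m| < c₀ * P + Pm →
      r ≤ |c| ∧ (|m| ≤ P → |c| ≤ r → |m| = P) := by
  obtain ⟨h', hPP'⟩ := h.step
  obtain ⟨hr1, h2PN, hPN, hrN, hc1⟩ := h.cons_facts
  set P' : ℤ := c₀ * P + Pm with hP'
  set r' : ℤ := rp - c₀ * r with hr'
  have hσ := h.hσ
  have habsσr : |σ * r| = r := by
    rcases hσ with h1 | h1 <;> simp [h1, abs_of_nonneg h.hr0]
  intro m c hmc hm hmlt
  have hkey := key N b P P' (σ * r) (-σ * r') h.hN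
    h.hdvd1
    (by exact h'.hdvd1)
    (by
      have hd := h'.hdet
      rcases hσ with h1 | h1
      · left; rw [h1]; nlinarith
      · right; rw [h1]; nlinarith)
    (by
      have h1 : σ * σ = 1 := by rcases hσ with h1 | h1 <;> rw [h1] <;> ring
      have h2 : 0 ≤ r * r' := mul_nonneg h.hr0 h'.hr0
      nlinarith)
    h.hP1 hPP'
    (by rw [habsσr]; exact hr1)
    (by
      intro he'
      have hr'0 : r' = 0 := by
        rcases hσ with h1 | h1 <;> rw [h1] at he' <;> omega
      have ht : t = [] := by
        cases t with
        | nil => rfl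
        | cons d t' =>
          exfalso
          obtain ⟨-, h1, h2⟩ := h'.euc
          omega
      have hc2 : 2 ≤ c₀ := by
        apply h.hlast
        rw [ht]
        simp
      have := h.hPm0
      have := h.hP1
      nlinarith)
    m c hmc hm hmlt
  rwa [habsσr] at hkey

/-- minimality endgame at a non-final stage, in integer terms. -/
lemma head_min {b N c₀ : ℤ} {t : List ℤ} {rp r P Pm σ : ℤ}
    (h : InvSt b N (c₀ :: t) rp r P Pm σ) :
    ∀ m m2 m3 : ℤ, |m| ≤ P → |m + m2 * N| ≤ P → |m * b + m3 * N| ≤ r →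
      (|m| = P ∧ |m + m2 * N| = P ∧ |m * b + m3 * N| = r) ∨
      (m = 0 ∧ m + m2 * N = 0 ∧ m * b + m3 * N = 0) := by
  obtain ⟨h', hPP'⟩ := h.step
  obtain ⟨hr1, h2PN, hPN, hrN, hc1⟩ := h.cons_facts
  intro m m2 m3 h1 h2 h3
  set m' : ℤ := m + m2 * N with hm'def
  set c : ℤ := m * b + m3 * N with hcdef
  have hdc1 : N ∣ c - m' * b := ⟨m3 - m2 * b, by rw [hcdef, hm'def]; ring⟩
  have hdc2 : N ∣ c - m * b := ⟨m3, by rw [hcdef]; ring⟩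
  by_cases hm'0 : m' = 0
  · right
    have hdm : N ∣ m := ⟨-m2, by rw [hm'def] at hm'0; linarith [hm'0]⟩
    have hdcN : N ∣ c := by
      have := hdc1
      rw [hm'0] at this
      simpa using this
    have hc0 : c = 0 := Int.eq_zero_of_abs_lt_dvd hdcN (by omega)
    have hm0 : m = 0 := Int.eq_zero_of_abs_lt_dvd hdm (by omega)
    exact ⟨hm0, hm'0, hc0⟩
  · left
    have hkey1 := stage_key h m' c hdc1 hm'0 (by omega)
    have hceq : |c| = r := le_antisymm h3 hkey1.1
    have hm'eq : |m'| = P := hkey1.2 h2 (le_of_eq hceq)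
    have hm0 : m ≠ 0 := by
      intro hm0
      have hdm' : N ∣ m' := ⟨m2, by rw [hm'def, hm0]; ring⟩
      have : m' = 0 := Int.eq_zero_of_abs_lt_dvd hdm' (by omega)
      exact hm'0 this
    have hkey2 := stage_key h m c hdc2 hm0 (by omega)
    have hmeq : |m| = P := hkey2.2 h1 (le_of_eq hceq)
    exact ⟨hmeq, hm'eq, hceq⟩

/-- completeness: every admissible pair is dominated by some listed point. -/
lemma complete (b N : ℤ) : ∀ (y : List ℤ) (rp r P Pm σ : ℤ), InvSt b N y rp r P Pm σ →
    ∀ m c : ℤ, N ∣ c - m * b → P ≤ |m| → |m| < N →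
      ∃ z ∈ ptsL y rp r P Pm, z.1 ≤ |m| ∧ z.2 ≤ |c|
  | [], rp, r, P, Pm, σ, h => by
    obtain ⟨hPN, -, -⟩ := h.final
    intro m c _ h1 h2
    omega
  | c₀ :: t, rp, r, P, Pm, σ, h => by
    intro m c hmc h1 h2
    obtain ⟨h', hPP'⟩ := h.step
    by_cases hsmall : |m| < c₀ * P + Pm
    · have hm0 : m ≠ 0 := by
        intro h0
        rw [h0] at h1
        simp at h1
        have := h.hP1
        omega
      have hkey := stage_key h m c hmc hm0 hsmall
      exact ⟨(P, r), by simp [ptsL], h1, hkey.1⟩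
    · push_neg at hsmall
      obtain ⟨z, hz, hz1, hz2⟩ := complete b N t r (rp - c₀ * r) (c₀ * P + Pm) P (-σ) h' m c hmc hsmall h2
      exact ⟨z, by simp [ptsL, hz], hz1, hz2⟩

/-- basic bounds for listed points. -/
lemma ptsL_bounds (b N : ℤ) : ∀ (y : List ℤ) (rp r P Pm σ : ℤ), InvSt b N y rp r P Pm σ →
    ∀ z ∈ ptsL y rp r P Pm, P ≤ z.1 ∧ 1 ≤ z.2 ∧ 2 * z.1 ≤ N
  | [], _, _, _, _, _, _ => by intro z hz; simp [ptsL] at hz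
  | c₀ :: t, rp, r, P, Pm, σ, h => by
    intro z hz
    obtain ⟨h', hPP'⟩ := h.step
    obtain ⟨hr1, h2PN, -, -, -⟩ := h.cons_facts
    rcases (by simpa [ptsL] using hz : z = (P, r) ∨ z ∈ ptsL t r (rp - c₀ * r) (c₀ * P + Pm) P) with
      h0 | h0
    · rw [h0]; exact ⟨le_refl _, hr1, h2PN⟩
    · obtain ⟨k1, k2, k3⟩ := ptsL_bounds b N t r (rp - c₀ * r) (c₀ * P + Pm) P (-σ) h' z h0
      exact ⟨by omega, k2, k3⟩

/-- the listed first coordinates are strictly increasing. -/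
lemma ptsL_chain (b N : ℤ) : ∀ (y : List ℤ) (rp r P Pm σ : ℤ), InvSt b N y rp r P Pm σ →
    List.Chain' (fun x w : ℤ × ℤ => x.1 < w.1) (ptsL y rp r P Pm)
  | [], _, _, _, _, _, _ => by simp [ptsL]; exact List.isChain_nil
  | c₀ :: t, rp, r, P, Pm, σ, h => by
    obtain ⟨h', hPP'⟩ := h.step
    have ih := ptsL_chain b N t r (rp - c₀ * r) (c₀ * P + Pm) P (-σ) h'
    rw [ptsL]
    apply List.isChain_cons.mpr
    refine ⟨?_, ih⟩
    intro w hw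
    have hwmem : w ∈ ptsL t r (rp - c₀ * r) (c₀ * P + Pm) P := List.mem_of_mem_head? hw
    have := (ptsL_bounds b N t r (rp - c₀ * r) (c₀ * P + Pm) P (-σ) h' w hwmem).1
    simpa using lt_of_lt_of_le hPP' this

/-- each listed point gives a Voronoi relative minimum. -/
lemma interior_vrm (b N : ℤ) : ∀ (y : List ℤ) (rp r P Pm σ : ℤ), InvSt b N y rp r P Pm σ →
    ∀ z ∈ ptsL y rp r P Pm, emb z.1 z.1 z.2 ∈ vrm (absSet (Gamma 1 b N))
  | [], _, _, _, _, _, _ => by intro z hz; simp [ptsL] at hz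
  | c₀ :: t, rp, r, P, Pm, σ, h => by
    intro z hz
    obtain ⟨h', hPP'⟩ := h.step
    rcases (by simpa [ptsL] using hz : z = (P, r) ∨ z ∈ ptsL t r (rp - c₀ * r) (c₀ * P + Pm) P) with
      h0 | h0
    · -- the head point (P, P, r)
      subst h0
      obtain ⟨hr1, h2PN, hPN, hrN, -⟩ := h.cons_facts
      have hP1 := h.hP1
      have hγS : emb P P r ∈ absSet (Gamma 1 b N) := by
        rw [mem_absSet_iff]
        constructor
        · obtain ⟨k, hk⟩ := h.hdvd1
          refine ⟨P, 0, -k, ?_⟩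
          have e1 : |P| = P := abs_of_nonneg (by omega)
          have e2 : |P + 0 * N| = P := by rw [show P + 0 * N = P by ring, e1]
          have e3 : |P * b + -k * N| = r := by
            have : P * b + -k * N = σ * r := by linarith [hk]
            rw [this]
            rcases h.hσ with h1 | h1 <;> rw [h1] <;> simp [abs_of_nonneg h.hr0]
          rw [e1, e2, e3]
        · apply emb_ne_zero
          rintro ⟨hP0, -, -⟩
          omega
      apply vrm_intro hγS
      intro p hp hbox
      rw [mem_absSet_iff] at hp
      obtain ⟨⟨m, m2, m3, rfl⟩, hne⟩ := hp
      rw [emb_box_iff (abs_nonneg _) (abs_nonneg _) (abs_nonneg _)] at hbox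
      obtain ⟨hb1, hb2, hb3⟩ := hbox
      rcases head_min h m m2 m3 hb1 hb2 hb3 with ⟨e1, e2, e3⟩ | ⟨e1, e2, e3⟩
      · rw [e1, e2, e3]
      · exfalso
        apply hne
        rw [e3, e2, e1]
        simp only [abs_zero]
        exact emb_zero_eq
    · exact interior_vrm b N t r (rp - c₀ * r) (c₀ * P + Pm) P (-σ) h' z h0
lemma Int.emod_le_self' {x N : ℤ} (h0 : 0 ≤ x) (hN : 0 < N) : x % N ≤ x := by
  have h2 : 0 ≤ x / N := Int.ediv_nonneg h0 hN.le
  have h3 : x % N = x - N * (x / N) := Int.emod_def x N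
  nlinarith

lemma mu_le_abs {N m x : ℤ} (hN : 0 < N) (hx : x % N = m % N) :
    min (m % N) ((-m) % N) ≤ |x| := by
  rcases le_or_gt 0 x with h0 | h0
  · calc min (m % N) ((-m) % N) ≤ m % N := min_le_left _ _
    _ = x % N := hx.symm
    _ ≤ x := Int.emod_le_self' h0 hN
    _ ≤ |x| := le_abs_self x
  · have hmod : Int.ModEq N x m := hx
    have hneg : (-x) % N = (-m) % N := hmod.neg
    calc min (m % N) ((-m) % N) ≤ (-m) % N := min_le_right _ _
    _ = (-x) % N := hneg.symm
    _ ≤ -x := Int.emod_le_self' (by omega) hN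
    _ ≤ |x| := neg_le_abs x

lemma axis1_mem (b N : ℤ) (hN : 0 < N) : emb N 0 0 ∈ absSet (Gamma 1 b N) := by
  rw [mem_absSet_iff]
  constructor
  · refine ⟨N, -1, -b, ?_⟩
    rw [show N + -1 * N = 0 by ring, show N * b + -b * N = 0 by ring,
      abs_of_pos hN, abs_zero]
  · apply emb_ne_zero
    rintro ⟨h, -, -⟩
    omega

lemma axis2_mem (b N : ℤ) (hN : 0 < N) : emb 0 N 0 ∈ absSet (Gamma 1 b N) := by
  rw [mem_absSet_iff]
  constructor
  · refine ⟨0, 1, 0, ?_⟩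
    rw [show (0:ℤ) + 1 * N = N by ring, show (0:ℤ) * b + 0 * N = 0 by ring,
      abs_of_pos hN, abs_zero]
  · apply emb_ne_zero
    rintro ⟨-, h, -⟩
    omega

lemma axis3_mem (b N : ℤ) (hN : 0 < N) : emb 0 0 N ∈ absSet (Gamma 1 b N) := by
  rw [mem_absSet_iff]
  constructor
  · refine ⟨0, 0, 1, ?_⟩
    rw [show (0:ℤ) + 0 * N = 0 by ring, show (0:ℤ) * b + 1 * N = N by ring,
      abs_of_pos hN, abs_zero]
  · apply emb_ne_zero
    rintro ⟨-, -, h⟩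
    omega

lemma axis1_vrm (b N : ℤ) (hN : 0 < N) : emb N 0 0 ∈ vrm (absSet (Gamma 1 b N)) := by
  apply vrm_intro (axis1_mem b N hN)
  intro p hp hbox
  rw [mem_absSet_iff] at hp
  obtain ⟨⟨m, m2, m3, rfl⟩, hne⟩ := hp
  rw [emb_box_iff (abs_nonneg _) (abs_nonneg _) (abs_nonneg _)] at hbox
  obtain ⟨hb1, hb2, hb3⟩ := hbox
  have h2 : m + m2 * N = 0 := abs_nonpos_iff.mp hb2
  have h3 : m * b + m3 * N = 0 := abs_nonpos_iff.mp hb3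
  have hdm : N ∣ m := ⟨-m2, by linarith⟩
  obtain ⟨k, hk⟩ := hdm
  have hm0 : m ≠ 0 := by
    intro h0
    apply hne
    rw [h3, h2, h0]
    simp only [abs_zero]
    exact emb_zero_eq
  have hk0 : k ≠ 0 := by rintro rfl; simp at hk; exact hm0 hk
  have h1k : 1 ≤ |k| := Int.one_le_abs hk0
  have habs : |m| = N := by
    rw [hk, abs_mul, abs_of_pos hN]
    rw [hk, abs_mul, abs_of_pos hN] at hb1
    nlinarith
  rw [habs, h2, h3, abs_zero]

lemma axis2_vrm (b N : ℤ) (hN : 0 < N) : emb 0 N 0 ∈ vrm (absSet (Gamma 1 b N)) := by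
  apply vrm_intro (axis2_mem b N hN)
  intro p hp hbox
  rw [mem_absSet_iff] at hp
  obtain ⟨⟨m, m2, m3, rfl⟩, hne⟩ := hp
  rw [emb_box_iff (abs_nonneg _) (abs_nonneg _) (abs_nonneg _)] at hbox
  obtain ⟨hb1, hb2, hb3⟩ := hbox
  have h1 : m = 0 := abs_nonpos_iff.mp hb1
  have h3 : m * b + m3 * N = 0 := by
    have : m * b + m3 * N = m3 * N := by rw [h1]; ring
    rw [this] at hb3 ⊢
    have : m3 = 0 := by
      rcases eq_or_ne m3 0 with h | h
      · exact h
      · exfalso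
        have := Int.one_le_abs h
        rw [abs_mul, abs_of_pos hN] at hb3
        nlinarith
    rw [this]; ring
  have hm2 : m2 ≠ 0 := by
    intro h0
    apply hne
    have h2 : m + m2 * N = 0 := by rw [h1, h0]; ring
    rw [h3, h2, h1]
    simp only [abs_zero]
    exact emb_zero_eq
  have h2 : |m + m2 * N| = N := by
    have he : m + m2 * N = m2 * N := by rw [h1]; ring
    rw [he, abs_mul, abs_of_pos hN]
    rw [he, abs_mul, abs_of_pos hN] at hb2
    have := Int.one_le_abs hm2
    nlinarith
  rw [h3, h2, h1]
  simp only [abs_zero]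

lemma axis3_vrm (b N : ℤ) (hN : 0 < N) : emb 0 0 N ∈ vrm (absSet (Gamma 1 b N)) := by
  apply vrm_intro (axis3_mem b N hN)
  intro p hp hbox
  rw [mem_absSet_iff] at hp
  obtain ⟨⟨m, m2, m3, rfl⟩, hne⟩ := hp
  rw [emb_box_iff (abs_nonneg _) (abs_nonneg _) (abs_nonneg _)] at hbox
  obtain ⟨hb1, hb2, hb3⟩ := hbox
  have h1 : m = 0 := abs_nonpos_iff.mp hb1
  have h2 : m + m2 * N = 0 := by
    have he : m + m2 * N = m2 * N := by rw [h1]; ring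
    rw [he] at hb2 ⊢
    have : m2 = 0 := by
      rcases eq_or_ne m2 0 with h | h
      · exact h
      · exfalso
        have := Int.one_le_abs h
        rw [abs_mul, abs_of_pos hN] at hb2
        nlinarith
    rw [this]; ring
  have hm3 : m3 ≠ 0 := by
    intro h0
    apply hne
    have h3 : m * b + m3 * N = 0 := by rw [h1, h0]; ring
    rw [h3, h2, h1]
    simp only [abs_zero]
    exact emb_zero_eq
  have h3 : |m * b + m3 * N| = N := by
    have he : m * b + m3 * N = m3 * N := by rw [h1]; ring
    rw [he, abs_mul, abs_of_pos hN]
    rw [he, abs_mul, abs_of_pos hN] at hb3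
    have := Int.one_le_abs hm3
    nlinarith
  rw [h3, h2, h1]
  simp only [abs_zero]

/-- Let `b, N` be coprime positive integers with `2b ≤ N`, and let
`b/N = [0; a₁, …, a_s]` be the regular continued fraction expansion of `b/N`.
Then `vrm(|Γ(1,b,N)|)` has exactly `s + 3` elements.  Here the expansion is
given as the list `l = [0, a₁, …, a_s]`, so `s + 3 = l.length + 2`. -/
theorem vrm_card_White
    (b N : ℤ) (hb : 1 ≤ b) (hbN : 2 * b ≤ N) (hcop : Int.gcd b N = 1)
    (l : List ℤ) (hl : IsRegularCF ((b : ℚ) / (N : ℚ)) l) :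
    (vrm (absSet (Gamma 1 b N))).encard = (l.length : ℕ∞) + 2 := by
  obtain ⟨a, hla, hane, halast, heuc⟩ := cf_top b N hb hbN hcop l hl
  have hN0 : 0 < N := by omega
  have inv0 : InvSt b N a N b 1 0 1 :=
    ⟨heuc, Or.inl rfl, by omega, by omega, le_refl 0, by omega, by ring,
      ⟨0, by ring⟩, ⟨1, by ring⟩, Or.inr hbN, halast⟩
  have hLb := ptsL_bounds b N a N b 1 0 1 inv0
  have hLvrm := interior_vrm b N a N b 1 0 1 inv0
  set W : List (Fin 3 → ℝ) :=
    emb N 0 0 :: emb 0 N 0 :: emb 0 0 N ::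
      (ptsL a N b 1 0).map (fun z => emb z.1 z.1 z.2) with hW
  have hset : vrm (absSet (Gamma 1 b N)) = {x | x ∈ W} := by
    ext γ
    simp only [Set.mem_setOf_eq, hW, List.mem_cons, List.mem_map]
    constructor
    · intro hγ
      have hγS := hγ.1
      rw [mem_absSet_iff] at hγS
      obtain ⟨⟨m, m2, m3, rfl⟩, hne0⟩ := hγS
      by_cases hdm : N ∣ m
      · by_cases hm0 : m = 0
        · subst hm0
          by_cases hm2 : m2 = 0
          · -- must be the third axis point
            right; right; left
            have hm3 : m3 ≠ 0 := by
              intro h0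
              apply hne0
              rw [show (0:ℤ) * b + m3 * N = 0 by rw [h0]; ring,
                show (0:ℤ) + m2 * N = 0 by rw [hm2]; ring]
              simp only [abs_zero]
              exact emb_zero_eq
            have hbox : emb 0 0 N ∈ box {emb |(0:ℤ)| |0 + m2 * N| |0 * b + m3 * N|} := by
              rw [emb_box_iff (le_refl 0) (le_refl 0) hN0.le]
              refine ⟨by simp, abs_nonneg _, ?_⟩
              rw [show (0:ℤ) * b + m3 * N = m3 * N by ring, abs_mul, abs_of_pos hN0]
              nlinarith [Int.one_le_abs hm3]
            exact (vrm_box_eq hγ (axis3_mem b N hN0) hbox).symm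
          · by_cases hm3 : m3 = 0
            · right; left
              have hbox : emb 0 N 0 ∈ box {emb |(0:ℤ)| |0 + m2 * N| |0 * b + m3 * N|} := by
                rw [emb_box_iff (le_refl 0) hN0.le (le_refl 0)]
                refine ⟨by simp, ?_, by simp [hm3]⟩
                rw [show (0:ℤ) + m2 * N = m2 * N by ring, abs_mul, abs_of_pos hN0]
                nlinarith [Int.one_le_abs hm2]
              exact (vrm_box_eq hγ (axis2_mem b N hN0) hbox).symm
            · exfalso
              have hbox : emb 0 N 0 ∈ box {emb |(0:ℤ)| |0 + m2 * N| |0 * b + m3 * N|} := by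
                rw [emb_box_iff (le_refl 0) hN0.le (le_refl 0)]
                refine ⟨by simp, ?_, abs_nonneg _⟩
                rw [show (0:ℤ) + m2 * N = m2 * N by ring, abs_mul, abs_of_pos hN0]
                nlinarith [Int.one_le_abs hm2]
              have heq := vrm_box_eq hγ (axis2_mem b N hN0) hbox
              have := (emb_inj heq).2.2
              rw [show (0:ℤ) * b + m3 * N = m3 * N by ring, abs_mul, abs_of_pos hN0] at this
              nlinarith [Int.one_le_abs hm3]
        · -- |m| ≥ N : the first axis point
          left
          have hbox : emb N 0 0 ∈ box {emb |m| |m + m2 * N| |m * b + m3 * N|} := by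
            rw [emb_box_iff hN0.le (le_refl 0) (le_refl 0)]
            refine ⟨?_, abs_nonneg _, abs_nonneg _⟩
            exact Int.le_of_dvd (abs_pos.mpr hm0) ((dvd_abs N m).mpr hdm)
          exact (vrm_box_eq hγ (axis1_mem b N hN0) hbox).symm
      · -- m is not divisible by N : interior point
        right; right; right
        set μ : ℤ := min (m % N) ((-m) % N) with hμ
        have hmod1 : m % N ≠ 0 := fun h => hdm (Int.dvd_of_emod_eq_zero h)
        have hmod2 : (-m) % N ≠ 0 := fun h => hdm (dvd_neg.mp (Int.dvd_of_emod_eq_zero h))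
        have hμ1 : 1 ≤ μ := by
          have e1 := Int.emod_nonneg m hN0.ne'
          have e2 := Int.emod_nonneg (-m) hN0.ne'
          omega
        have hμN : μ < N := lt_of_le_of_lt (min_le_left _ _) (Int.emod_lt_of_pos m hN0)
        have hb0 : μ ≤ |m| := mu_le_abs hN0 rfl
        have hb1 : μ ≤ |m + m2 * N| := mu_le_abs hN0 (Int.add_mul_emod_self_right m m2 N)
        have key' : ∃ z ∈ ptsL a N b 1 0, z.1 ≤ μ ∧ z.2 ≤ |m * b + m3 * N| := by
          rcases le_total (m % N) ((-m) % N) with hc | hc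
          · have hμe : μ = m % N := min_eq_left hc
            have hdvd : N ∣ (m * b + m3 * N) - μ * b := by
              have h1 : N ∣ m - μ := by
                rw [hμe]
                exact ⟨m / N, by rw [Int.emod_def]; ring⟩
              have : (m * b + m3 * N) - μ * b = (m - μ) * b + m3 * N := by ring
              rw [this]
              exact dvd_add (h1.mul_right b) ⟨m3, by ring⟩
            obtain ⟨z, hz, hz1, hz2⟩ := complete b N a N b 1 0 1 inv0 μ (m * b + m3 * N)
              hdvd (by rw [abs_of_nonneg (by omega : (0:ℤ) ≤ μ)]; exact hμ1)
              (by rw [abs_of_nonneg (by omega : (0:ℤ) ≤ μ)]; exact hμN)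
            exact ⟨z, hz, by rwa [abs_of_nonneg (by omega : (0:ℤ) ≤ μ)] at hz1, hz2⟩
          · have hμe : μ = (-m) % N := min_eq_right hc
            have hdvd : N ∣ (-(m * b + m3 * N)) - μ * b := by
              have h1 : N ∣ (-m) - μ := by
                rw [hμe]
                exact ⟨(-m) / N, by rw [Int.emod_def]; ring⟩
              have : (-(m * b + m3 * N)) - μ * b = ((-m) - μ) * b + (-m3) * N := by ring
              rw [this]
              exact dvd_add (h1.mul_right b) ⟨-m3, by ring⟩
            obtain ⟨z, hz, hz1, hz2⟩ := complete b N a N b 1 0 1 inv0 μ (-(m * b + m3 * N))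
              hdvd (by rw [abs_of_nonneg (by omega : (0:ℤ) ≤ μ)]; exact hμ1)
              (by rw [abs_of_nonneg (by omega : (0:ℤ) ≤ μ)]; exact hμN)
            rw [abs_neg] at hz2
            exact ⟨z, hz, by rwa [abs_of_nonneg (by omega : (0:ℤ) ≤ μ)] at hz1, hz2⟩
        obtain ⟨z, hz, hz1, hz2⟩ := key'
        obtain ⟨hzb1, hzb2, -⟩ := hLb z hz
        have hbox : emb z.1 z.1 z.2 ∈ box {emb |m| |m + m2 * N| |m * b + m3 * N|} := by
          rw [emb_box_iff (by omega) (by omega) (by omega)]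
          exact ⟨by omega, by omega, hz2⟩
        exact ⟨z, hz, vrm_box_eq hγ (hLvrm z hz).1 hbox⟩
    · rintro (rfl | rfl | rfl | ⟨z, hz, rfl⟩)
      · exact axis1_vrm b N hN0
      · exact axis2_vrm b N hN0
      · exact axis3_vrm b N hN0
      · exact hLvrm z hz
  -- cardinality computation
  have hnodup : W.Nodup := by
    have hchain := ptsL_chain b N a N b 1 0 1 inv0
    haveI : IsTrans (ℤ × ℤ) (fun x w : ℤ × ℤ => x.1 < w.1) := ⟨fun _ _ _ => lt_trans⟩
    have hpw := List.isChain_iff_pairwise.mp hchain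
    have hmapnd : ((ptsL a N b 1 0).map (fun z => emb z.1 z.1 z.2)).Nodup := by
      rw [List.Nodup, List.pairwise_map]
      refine hpw.imp ?_
      intro x y hxy heq
      have := (emb_inj heq).1
      omega
    have hnm1 : emb N 0 0 ∉ (ptsL a N b 1 0).map (fun z => emb z.1 z.1 z.2) := by
      intro hmem
      obtain ⟨z, hz, heq⟩ := List.mem_map.mp hmem
      obtain ⟨h1, h2, -⟩ := emb_inj heq
      have := (hLb z hz).1
      omega
    have hnm2 : emb 0 N 0 ∉ (ptsL a N b 1 0).map (fun z => emb z.1 z.1 z.2) := by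
      intro hmem
      obtain ⟨z, hz, heq⟩ := List.mem_map.mp hmem
      obtain ⟨h1, -, -⟩ := emb_inj heq
      have := (hLb z hz).1
      omega
    have hnm3 : emb 0 0 N ∉ (ptsL a N b 1 0).map (fun z => emb z.1 z.1 z.2) := by
      intro hmem
      obtain ⟨z, hz, heq⟩ := List.mem_map.mp hmem
      obtain ⟨h1, -, -⟩ := emb_inj heq
      have := (hLb z hz).1
      omega
    have h12 : emb N 0 0 ≠ emb 0 N 0 := by
      intro h; have := (emb_inj h).1; omega
    have h13 : emb N 0 0 ≠ emb 0 0 N := by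
      intro h; have := (emb_inj h).1; omega
    have h23 : emb 0 N 0 ≠ emb 0 0 N := by
      intro h; have := (emb_inj h).2.1; omega
    rw [hW]
    refine List.Nodup.cons ?_ (List.Nodup.cons ?_ (List.Nodup.cons hnm3 hmapnd))
    · simp only [List.mem_cons]
      rintro (h | h | h)
      · exact h12 h
      · exact h13 h
      · exact hnm1 h
    · simp only [List.mem_cons]
      rintro (h | h)
      · exact h23 h
      · exact hnm2 h
  rw [hset, show {x | x ∈ W} = ↑W.toFinset from (List.coe_toFinset W).symm,
    Set.encard_coe_eq_coe_finsetCard, List.toFinset_card_of_nodup hnodup]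
  have hlen : W.length = a.length + 3 := by
    rw [hW]
    simp [List.length_map, ptsL_length]
  have hllen : l.length = a.length + 1 := by rw [hla]; simp
  rw [hlen, hllen]
  push_cast
  ring
end
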